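/- Let $B$ be a commutative ring, let $c \ge 1$ and $t \ge 1$ be integers, and let $S = B[U_{i,j} : 1 \le i \le c,\ 1 \le j \le t]$ be the polynomial ring over $B$ in the $c\,t$ variables $U_{i,j}$. Given elements $b_2,\dots,b_t \in B$, define $\tilde\alpha_i := U_{i,1} + b_2 U_{i,2} + \dots + b_t U_{i,t} \in S$ for $i = 1,\dots,c$. If $g_1,\dots,g_m \in B$ is a regular sequence in $B$, then $\tilde\alpha_1,\dots,\tilde\alpha_c, g_1,\dots,g_m$ is a regular sequence in $S$. -/

import Mathlib

open MvPolynomial RingTheory.Sequence Submodule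
open scoped Pointwise


lemma aux_transfer {S T : Type} [CommRing S] [CommRing T] (e : S ≃+* T) (rs : List S)
    (h : IsRegular S rs) : IsRegular T (rs.map e) := by
  refine (AddEquiv.isRegular_congr (e := e.toAddEquiv) ?_).mp h
  rw [List.forall₂_map_right_iff]
  exact List.forall₂_same.mpr fun a _ x => by
    simpa only [smul_eq_mul, RingEquiv.toAddEquiv_eq_coe, RingEquiv.coe_toAddEquiv] using
      map_mul e a x

lemma aux_span_eq {S : Type} [CommRing S] (r : S) :
    (r • ⊤ : Submodule S S) = (Ideal.span {r} : Ideal S) := by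
  rw [← Submodule.ideal_span_singleton_smul, Submodule.span_smul_eq, Submodule.set_smul_top_eq_span]

lemma aux_cons_iff {S T : Type} [CommRing S] [CommRing T] (r : S) (rs : List S)
    (e : (S ⧸ Ideal.span {r}) ≃+* T) :
    IsRegular S (r :: rs) ↔
      IsSMulRegular S r ∧ IsRegular T (rs.map fun a => e (Ideal.Quotient.mk _ a)) := by
  rw [RingTheory.Sequence.isRegular_cons_iff]
  refine and_congr_right fun _ => ?_
  refine AddEquiv.isRegular_congr
    (e := ((Submodule.quotEquivOfEq _ _ (aux_span_eq r)).toAddEquiv.trans e.toAddEquiv)) ?_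
  rw [List.forall₂_map_right_iff]
  refine List.forall₂_same.mpr fun a _ x => ?_
  obtain ⟨y, rfl⟩ := Submodule.Quotient.mk_surjective _ x
  have h1 : a • (Submodule.Quotient.mk y : QuotSMulTop r S) = Submodule.Quotient.mk (a * y) := rfl
  rw [h1]
  show e (Submodule.quotEquivOfEq (r • ⊤) (Ideal.span {r}) (aux_span_eq r) (Submodule.Quotient.mk (a * y))) =
    _ • e (Submodule.quotEquivOfEq (r • ⊤) (Ideal.span {r}) (aux_span_eq r) (Submodule.Quotient.mk y))
  rw [Submodule.quotEquivOfEq_mk, Submodule.quotEquivOfEq_mk]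
  show e (Ideal.Quotient.mk _ (a * y)) = _
  rw [map_mul, map_mul, smul_eq_mul]
  rfl


lemma aux_C_smulRegular {σ B : Type} [CommRing B] {a : B} (h : IsSMulRegular B a) :
    IsSMulRegular (MvPolynomial σ B) (C a : MvPolynomial σ B) := by
  intro p q hpq
  ext d
  apply h
  have := congrArg (coeff d) hpq
  simpa only [smul_eq_mul, coeff_C_mul] using this

lemma aux_X_smulRegular {σ B : Type} [CommRing B] (v : σ) :
    IsSMulRegular (MvPolynomial σ B) (X v : MvPolynomial σ B) := by
  intro p q hpq
  ext d
  have := congrArg (coeff (d + Finsupp.single v 1)) hpq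
  simpa only [smul_eq_mul, mul_comm (X v : MvPolynomial σ B), coeff_mul_X] using this


lemma aux_qeq_C {σ B : Type} [CommRing B] (I : Ideal B) (a : B) :
    quotientEquivQuotientMvPolynomial (σ := σ) I (C (Ideal.Quotient.mk I a)) =
      Ideal.Quotient.mk _ (C a) := by
  simp [quotientEquivQuotientMvPolynomial]

lemma aux_const (σ : Type) : ∀ (n : ℕ) (B : Type) [CommRing B] (gs : List B),
    gs.length = n → IsRegular B gs → IsRegular (MvPolynomial σ B) (gs.map fun a => (C a : MvPolynomial σ B)) := by
  intro n
  induction n with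
  | zero =>
    intro B _ gs hlen hg
    obtain rfl := List.length_eq_zero_iff.mp hlen
    haveI := hg.nontrivial
    exact IsRegular.nil _ _
  | succ n ih =>
    intro B _ gs hlen hg
    match gs, hlen with
    | g :: gs', hlen =>
      obtain ⟨h1, h2⟩ := (aux_cons_iff g gs' (RingEquiv.refl _)).mp hg
      set I : Ideal B := Ideal.span {g} with hI
      have hE : Ideal.span {(C g : MvPolynomial σ B)} =
          Ideal.map (C : B →+* MvPolynomial σ B) I := by
        rw [Ideal.map_span, Set.image_singleton]
      let E : (MvPolynomial σ B ⧸ Ideal.span {(C g : MvPolynomial σ B)}) ≃+*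
          MvPolynomial σ (B ⧸ I) :=
        (Ideal.quotEquivOfEq hE).trans (quotientEquivQuotientMvPolynomial I).symm.toRingEquiv
      have hEC : ∀ a : B, E (Ideal.Quotient.mk _ (C a)) = C (Ideal.Quotient.mk I a) := by
        intro a
        have h3 : (quotientEquivQuotientMvPolynomial (σ := σ) I).symm
            (Ideal.Quotient.mk _ (C a)) = C (Ideal.Quotient.mk I a) := by
          rw [AlgEquiv.symm_apply_eq, aux_qeq_C]
        show (quotientEquivQuotientMvPolynomial I).symm
          (Ideal.quotEquivOfEq hE (Ideal.Quotient.mk _ (C a))) = _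
        rw [Ideal.quotEquivOfEq_mk]
        exact h3
      rw [List.map_cons]
      refine (aux_cons_iff _ _ E).mpr ⟨aux_C_smulRegular h1, ?_⟩
      have h4 : (gs'.map C).map (fun a => E (Ideal.Quotient.mk _ a)) =
          (gs'.map (Ideal.Quotient.mk I)).map C := by
        rw [List.map_map, List.map_map]
        exact List.map_congr_left fun a _ => hEC a
      rw [h4]
      refine ih (B ⧸ I) (gs'.map (Ideal.Quotient.mk I)) (by simpa using Nat.succ_injective hlen) ?_
      simpa using h2


noncomputable def polyQuotX (A : Type) [CommRing A] :
    (Polynomial A ⧸ Ideal.span {(Polynomial.X : Polynomial A)}) ≃+* A :=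
  (Ideal.quotEquivOfEq (by rw [Polynomial.C_0, sub_zero] :
      Ideal.span {(Polynomial.X : Polynomial A)} =
      Ideal.span {Polynomial.X - Polynomial.C (0 : A)})).trans
    (Polynomial.quotientSpanXSubCAlgEquiv (0 : A)).toRingEquiv

lemma polyQuotX_mk (A : Type) [CommRing A] (p : Polynomial A) :
    polyQuotX A (Ideal.Quotient.mk _ p) = p.eval 0 := by
  rw [polyQuotX, RingEquiv.trans_apply, Ideal.quotEquivOfEq_mk]
  exact Polynomial.quotientSpanXSubCAlgEquiv_mk _ _

lemma aux_vars (B : Type) [CommRing B] (gs : List B) (hg : IsRegular B gs) :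
    ∀ n : ℕ, IsRegular (MvPolynomial (Fin n) B)
      ((List.ofFn (X : Fin n → MvPolynomial (Fin n) B)) ++
        gs.map fun a => (C a : MvPolynomial (Fin n) B)) := by
  intro n
  induction n with
  | zero =>
    rw [List.ofFn_zero, List.nil_append]
    have h1 := aux_transfer (isEmptyRingEquiv B (Fin 0)).symm gs hg
    have h2 : gs.map (isEmptyRingEquiv B (Fin 0)).symm =
        gs.map fun a => (C a : MvPolynomial (Fin 0) B) := by
      refine List.map_congr_left fun a _ => ?_
      have h3 : isEmptyRingEquiv B (Fin 0) (C a) = a := by rw [isEmptyRingEquiv_eq_coeff_zero]; exact coeff_zero_C a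
      conv_lhs => rw [← h3]
      rw [RingEquiv.symm_apply_apply]
    rwa [h2] at h1
  | succ n ih =>
    rw [List.ofFn_succ, List.cons_append]
    set F : MvPolynomial (Fin (n+1)) B ≃+* Polynomial (MvPolynomial (Fin n) B) :=
      (finSuccEquiv B n).toRingEquiv with hF
    have hmap : Ideal.span {(Polynomial.X : Polynomial (MvPolynomial (Fin n) B))} =
        (Ideal.span {(X 0 : MvPolynomial (Fin (n+1)) B)}).map (F : _ →+* _) := by
      rw [Ideal.map_span, Set.image_singleton]
      congr 1
      show _ = {F (X 0)}
      rw [hF]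
      simp [finSuccEquiv_X_zero]
    set E : (MvPolynomial (Fin (n+1)) B ⧸ Ideal.span {(X 0 : MvPolynomial (Fin (n+1)) B)}) ≃+*
        MvPolynomial (Fin n) B :=
      (Ideal.quotientEquiv _ _ F hmap).trans (polyQuotX _) with hE
    have hEX : ∀ i : Fin n, E (Ideal.Quotient.mk _ (X i.succ)) = X i := by
      intro i
      rw [hE]
      rw [RingEquiv.trans_apply]
      rw [Ideal.quotientEquiv_mk, polyQuotX_mk]
      show ((finSuccEquiv B n) (X i.succ)).eval 0 = _
      rw [finSuccEquiv_X_succ, Polynomial.eval_C]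
    have hEC : ∀ a : B, E (Ideal.Quotient.mk _ (C a)) = C a := by
      intro a
      rw [hE]
      rw [RingEquiv.trans_apply]
      rw [Ideal.quotientEquiv_mk, polyQuotX_mk]
      show ((finSuccEquiv B n) (C a)).eval 0 = _
      simp [finSuccEquiv_apply]
    refine (aux_cons_iff _ _ E).mpr ⟨aux_X_smulRegular _, ?_⟩
    have h4 : ((List.ofFn fun i : Fin n => (X i.succ : MvPolynomial (Fin (n+1)) B)) ++
          gs.map fun a => (C a : MvPolynomial (Fin (n+1)) B)).map
            (fun a => E (Ideal.Quotient.mk _ a)) =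
        (List.ofFn (X : Fin n → MvPolynomial (Fin n) B)) ++
          gs.map fun a => (C a : MvPolynomial (Fin n) B) := by
      rw [List.map_append, List.map_ofFn, List.map_map]
      congr 1
      · exact congrArg List.ofFn (funext fun i => by rw [Function.comp_apply]; exact hEX i)
      · exact List.map_congr_left fun a _ => by rw [Function.comp_apply]; exact hEC a
    rw [h4]
    exact ih


lemma aux_auto {c t : ℕ} {B : Type} [CommRing B] (b : Fin t → B) (j0 : Fin t) :
    ∃ φ : MvPolynomial (Fin c × Fin t) B ≃ₐ[B] MvPolynomial (Fin c × Fin t) B,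
      (∀ i, φ (X (i, j0)) =
        X (i, j0) + ∑ j ∈ Finset.univ.erase j0, C (b j) * X (i, j)) ∧
      (∀ a, φ (C a) = C a) := by
  set D : Fin c × Fin t → MvPolynomial (Fin c × Fin t) B := fun p =>
    if p.2 = j0 then ∑ j ∈ Finset.univ.erase j0, C (b j) * X (p.1, j) else 0 with hDdef
  have hD : ∀ (w : Fin c × Fin t → MvPolynomial (Fin c × Fin t) B),
      (∀ q : Fin c × Fin t, q.2 ≠ j0 → w q = X q) → ∀ p, aeval w (D p) = D p := by
    intro w hw p
    by_cases h : p.2 = j0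
    · simp only [hDdef, if_pos h, map_sum, map_mul, aeval_C, aeval_X]
      refine Finset.sum_congr rfl fun j hj => ?_
      rw [hw (p.1, j) (Finset.ne_of_mem_erase hj), MvPolynomial.algebraMap_eq]
    · simp [hDdef, if_neg h]
  have hwf : ∀ q : Fin c × Fin t, q.2 ≠ j0 → X q + D q = X q := by
    intro q hq; simp [hDdef, if_neg hq]
  have hwfinv : ∀ q : Fin c × Fin t, q.2 ≠ j0 → X q - D q = X q := by
    intro q hq; simp [hDdef, if_neg hq]
  have hcomp1 : (aeval (fun p => X p - D p) : MvPolynomial (Fin c × Fin t) B →ₐ[B] _).comp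
      (aeval (fun p => X p + D p)) = AlgHom.id B _ := by
    apply MvPolynomial.algHom_ext
    intro p
    rw [AlgHom.comp_apply, AlgHom.coe_id, id_eq, aeval_X, map_add, aeval_X, hD _ hwfinv p]
    ring
  have hcomp2 : (aeval (fun p => X p + D p) : MvPolynomial (Fin c × Fin t) B →ₐ[B] _).comp
      (aeval (fun p => X p - D p)) = AlgHom.id B _ := by
    apply MvPolynomial.algHom_ext
    intro p
    rw [AlgHom.comp_apply, AlgHom.coe_id, id_eq, aeval_X, map_sub, aeval_X, hD _ hwf p]
    ring
  refine ⟨AlgEquiv.ofAlgHom _ _ hcomp2 hcomp1, fun i => ?_, fun a => ?_⟩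
  · show aeval (fun p => X p + D p) (X (i, j0)) = _
    rw [aeval_X]
    congr 1
    rw [hDdef]
    exact if_pos rfl
  · show aeval (fun p => X p + D p) (C a) = _
    rw [aeval_C, MvPolynomial.algebraMap_eq]

lemma aux_split {c t : ℕ} {B : Type} [CommRing B] (j0 : Fin t) :
    ∃ Ψ : MvPolynomial (Fin c × Fin t) B ≃ₐ[B]
        MvPolynomial (Fin c) (MvPolynomial (Fin c × {j : Fin t // j ≠ j0}) B),
      (∀ i, Ψ (X (i, j0)) = X i) ∧ (∀ a, Ψ (C a) = C (C a)) := by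
  set q : (Fin c × Fin t) ≃ (Fin c ⊕ (Fin c × {j : Fin t // j ≠ j0})) :=
    { toFun := fun p => if h : p.2 = j0 then Sum.inl p.1 else Sum.inr (p.1, ⟨p.2, h⟩)
      invFun := Sum.elim (fun i => (i, j0)) (fun x => (x.1, x.2.1))
      left_inv := by
        rintro ⟨i, j⟩
        by_cases h : j = j0 <;> simp [h]
      right_inv := by
        rintro (i | ⟨i, j, hj⟩)
        · simp
        · simp [hj] } with hq
  refine ⟨(renameEquiv B q).trans (sumAlgEquiv B (Fin c) _), fun i => ?_, fun a => ?_⟩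
  · rw [AlgEquiv.trans_apply, renameEquiv_apply, rename_X]
    have h1 : q (i, j0) = Sum.inl i := by simp [hq]
    rw [h1]
    exact sumAlgEquiv_X_inl _ _ _ _
  · rw [AlgEquiv.trans_apply, renameEquiv_apply, rename_C]
    exact sumAlgEquiv_C_inl _ _ _ _


/-- **Generic linear forms prepend to regular sequences.**
Let `S = B[U_{i,j}]`, `1 ≤ i ≤ c`, `1 ≤ j ≤ t`, be a polynomial ring over a commutative
ring `B` and, given `b_2, …, b_t ∈ B`, let `α̃ᵢ = U_{i,1} + b_2 U_{i,2} + ⋯ + b_t U_{i,t}`.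
If `g₁, …, g_m` is a regular sequence in `B`, then `α̃₁, …, α̃_c, g₁, …, g_m` is a
regular sequence in `S`. -/
theorem generic_forms_append_regular_sequence
    (B : Type) [CommRing B] (c t m : ℕ) (hc : 1 ≤ c) (ht : 1 ≤ t)
    (b : Fin t → B)
    (α : Fin c → MvPolynomial (Fin c × Fin t) B)
    (hα : ∀ i (h0 : 0 < t), α i = X (i, ⟨0, h0⟩) +
      ∑ j ∈ Finset.univ.erase ⟨0, h0⟩, C (b j) * X (i, j))
    (g : Fin m → B)
    (hg : RingTheory.Sequence.IsRegular B (List.ofFn g)) :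
    RingTheory.Sequence.IsRegular (MvPolynomial (Fin c × Fin t) B)
      (List.ofFn α ++ List.ofFn fun i => (C (g i) : MvPolynomial (Fin c × Fin t) B)) := by
  have h0 : 0 < t := ht
  obtain ⟨φ, hφX, hφC⟩ := aux_auto (c := c) b (⟨0, h0⟩ : Fin t)
  obtain ⟨Ψ, hΨX, hΨC⟩ := aux_split (c := c) (B := B) (⟨0, h0⟩ : Fin t)
  set A := MvPolynomial (Fin c × {j : Fin t // j ≠ (⟨0, h0⟩ : Fin t)}) B with hA
  set etot : MvPolynomial (Fin c) A ≃+* MvPolynomial (Fin c × Fin t) B :=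
    Ψ.toRingEquiv.symm.trans φ.toRingEquiv with hetot
  have hetotX : ∀ i : Fin c, etot (X i) = α i := by
    intro i
    have h1 : Ψ.symm (X i) = X (i, ⟨0, h0⟩) := by
      rw [← hΨX i, AlgEquiv.symm_apply_apply]
    rw [hetot, RingEquiv.trans_apply]
    show φ (Ψ.symm (X i)) = α i
    rw [h1, hφX, ← hα i h0]
  have hetotC : ∀ a : B, etot (C (C a)) = C a := by
    intro a
    have h1 : Ψ.symm (C (C a)) = C a := by
      rw [← hΨC a, AlgEquiv.symm_apply_apply]
    rw [hetot, RingEquiv.trans_apply]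
    show φ (Ψ.symm (C (C a))) = C a
    rw [h1, hφC]
  have inner : IsRegular A ((List.ofFn g).map fun a => (C a : A)) :=
    aux_const _ _ B (List.ofFn g) rfl hg
  have outer := aux_vars A ((List.ofFn g).map fun a => (C a : A)) inner c
  have final := aux_transfer etot _ outer
  have hlist : ((List.ofFn (X : Fin c → MvPolynomial (Fin c) A)) ++
        ((List.ofFn g).map fun a => (C a : A)).map
          fun a => (C a : MvPolynomial (Fin c) A)).map etot =
      List.ofFn α ++ List.ofFn fun i => (C (g i) : MvPolynomial (Fin c × Fin t) B) := by
    rw [List.map_append, List.map_ofFn, List.map_map, List.map_map, List.map_ofFn]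
    congr 1
    · exact congrArg List.ofFn (funext fun i => hetotX i)
    · exact congrArg List.ofFn (funext fun i => hetotC (g i))
  rwa [hlist] at final
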